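/- For every ξ ∈ ℝ³, the adjugate (transpose of the cofactor matrix) of the 8×8 matrix A(ξ) is the zero matrix; equivalently, rank A(ξ) ≤ 6 for every ξ. (Consequently the adjugate of q(τ,ξ) = τ·Id₈ + A(ξ) is divisible by τ: ᵗq^co = τ·M for a matrix M depending polynomially on τ and ξ.) -/
import Mathlib

open Matrix

noncomputable section

/-- Euclidean dot product on `ℝ³`. -/
def dot3 (a b : Fin 3 → ℝ) : ℝ := a 0 * b 0 + a 1 * b 1 + a 2 * b 2

/-- Cross product on `ℝ³`. -/
def cross3 (a b : Fin 3 → ℝ) : Fin 3 → ℝ :=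
  ![a 1 * b 2 - a 2 * b 1, a 2 * b 0 - a 0 * b 2, a 0 * b 1 - a 1 * b 0]

/-- The matrix `A(ξ) = q(0,ξ)` of the principal symbol of the linearized ideal
MHD system in the coordinates `(ρ̇,u̇₁,u̇₂,u̇₃,Ḣ₁,Ḣ₂,Ḣ₃,ṗ)`, so that
`q(τ,ξ) = τ·Id₈ + A(ξ)`. -/
def Amat (ρ γ p : ℝ) (H ξ : Fin 3 → ℝ) : Matrix (Fin 8) (Fin 8) ℝ :=
  !![0, ρ * ξ 0, ρ * ξ 1, ρ * ξ 2, 0, 0, 0, 0;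
     0, 0, 0, 0, (ξ 0 * H 0 - dot3 H ξ) / ρ, (ξ 0 * H 1) / ρ, (ξ 0 * H 2) / ρ, ξ 0 / ρ;
     0, 0, 0, 0, (ξ 1 * H 0) / ρ, (ξ 1 * H 1 - dot3 H ξ) / ρ, (ξ 1 * H 2) / ρ, ξ 1 / ρ;
     0, 0, 0, 0, (ξ 2 * H 0) / ρ, (ξ 2 * H 1) / ρ, (ξ 2 * H 2 - dot3 H ξ) / ρ, ξ 2 / ρ;
     0, H 0 * ξ 0 - dot3 H ξ, H 0 * ξ 1, H 0 * ξ 2, 0, 0, 0, 0;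
     0, H 1 * ξ 0, H 1 * ξ 1 - dot3 H ξ, H 1 * ξ 2, 0, 0, 0, 0;
     0, H 2 * ξ 0, H 2 * ξ 1, H 2 * ξ 2 - dot3 H ξ, 0, 0, 0, 0;
     0, γ * p * ξ 0, γ * p * ξ 1, γ * p * ξ 2, 0, 0, 0, 0]

@[simp] lemma cons_val_five' {α : Type*} {m : ℕ} (x : α) (u : Fin (m+5) → α) :
    vecCons x u 5 = vecHead (vecTail (vecTail (vecTail (vecTail u)))) := rfl
@[simp] lemma cons_val_six' {α : Type*} {m : ℕ} (x : α) (u : Fin (m+6) → α) :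
    vecCons x u 6 = vecHead (vecTail (vecTail (vecTail (vecTail (vecTail u))))) := rfl
@[simp] lemma cons_val_seven' {α : Type*} {m : ℕ} (x : α) (u : Fin (m+7) → α) :
    vecCons x u 7 = vecHead (vecTail (vecTail (vecTail (vecTail (vecTail (vecTail u)))))) := rfl

lemma adj_zero_of_two_ker (A : Matrix (Fin 8) (Fin 8) ℝ) (x y : Fin 8 → ℝ)
    (hx : A.mulVec x = 0) (hy : A.mulVec y = 0)
    (h : ∀ a b : ℝ, a • x + b • y = 0 → a = 0 ∧ b = 0) :
    A.adjugate = 0 ∧ A.rank ≤ 6 := by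
  have hker : ∀ (j : Fin 8) (r : Fin 8 → ℝ) (w : Fin 8 → ℝ), A.mulVec w = 0 → r ⬝ᵥ w = 0 →
      (A.updateRow j r).mulVec w = 0 := by
    intro j r w hw hr
    funext k
    by_cases hk : k = j
    · subst hk; simp [mulVec, updateRow_apply, hr]
    · simpa [mulVec, updateRow_apply, hk] using congrFun hw k
  constructor
  · ext i j
    simp only [Matrix.zero_apply]
    rw [adjugate_apply]
    rw [← Matrix.exists_mulVec_eq_zero_iff]
    by_cases hxi : x i = 0
    · refine ⟨x, fun hx0 => ?_, hker j _ x hx (by simp [hxi])⟩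
      exact one_ne_zero ((h 1 0 (by simp [hx0])).1)
    · refine ⟨y i • x - x i • y, fun hw0 => ?_, ?_⟩
      · exact hxi (neg_eq_zero.mp (h (y i) (-x i) (by rw [neg_smul, ← sub_eq_add_neg]; exact hw0)).2)
      · apply hker j _ _ _ (by simp [single_dotProduct]; ring)
        rw [Matrix.mulVec_sub, Matrix.mulVec_smul, Matrix.mulVec_smul, hx, hy]; simp
  · have hli : LinearIndependent ℝ ![x, y] := LinearIndependent.pair_iff.mpr h
    have hspan : Submodule.span ℝ (Set.range ![x, y]) ≤ LinearMap.ker A.mulVecLin := by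
      rw [Submodule.span_le]
      rintro v ⟨i, rfl⟩
      fin_cases i <;> simpa [LinearMap.mem_ker]
    have h2 : 2 ≤ Module.finrank ℝ (LinearMap.ker A.mulVecLin) := by
      have := finrank_span_eq_card hli
      simpa [this] using Submodule.finrank_mono hspan
    have := A.mulVecLin.finrank_range_add_finrank_ker
    simp only [Module.finrank_fin_fun] at this
    unfold Matrix.rank
    omega

set_option maxHeartbeats 1600000 in
/-- The adjugate of `A(ξ)` vanishes; equivalently `rank A(ξ) ≤ 6`.
Consequently the adjugate of `q(τ,ξ) = τ·Id₈ + A(ξ)` is divisible by `τ`. -/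
theorem stmt10 (ρ γ p : ℝ) (H : Fin 3 → ℝ) :
    ∀ ξ : Fin 3 → ℝ,
      (Amat ρ γ p H ξ).adjugate = 0 ∧
      (Amat ρ γ p H ξ).rank ≤ 6 ∧
      ∀ τ : ℝ, ∃ M : Matrix (Fin 8) (Fin 8) ℝ,
        (τ • (1 : Matrix (Fin 8) (Fin 8) ℝ) + Amat ρ γ p H ξ).adjugate = τ • M := by
  intro ξ
  have key : (Amat ρ γ p H ξ).adjugate = 0 ∧ (Amat ρ γ p H ξ).rank ≤ 6 := by
    by_cases hξ : ξ = 0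
    · have hA : Amat ρ γ p H ξ = 0 := by
        subst hξ
        ext i j
        fin_cases i <;> fin_cases j <;> simp [Amat, dot3, Matrix.vecHead, Matrix.vecTail]
      rw [hA]
      simp
    · apply adj_zero_of_two_ker (Amat ρ γ p H ξ) ![1,0,0,0,0,0,0,0] ![0,0,0,0,ξ 0,ξ 1,ξ 2,0]
      · funext k
        fin_cases k <;> simp [Amat, mulVec, dotProduct, Fin.sum_univ_eight, Matrix.vecHead, Matrix.vecTail]
      · funext k
        fin_cases k <;> simp [Amat, mulVec, dotProduct, Fin.sum_univ_eight, Matrix.vecHead, Matrix.vecTail, dot3] <;> ring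
      · intro a b hab
        have h0 := congrFun hab 0
        have h4 := congrFun hab 4
        have h5 := congrFun hab 5
        have h6 := congrFun hab 6
        simp at h0 h4 h5 h6
        refine ⟨h0, ?_⟩
        by_contra hb
        apply hξ
        funext k
        fin_cases k
        · exact h4.resolve_left hb
        · exact h5.resolve_left hb
        · exact h6.resolve_left hb
  refine ⟨key.1, key.2, ?_⟩
  intro τ
  by_cases hτ : τ = 0
  · exact ⟨0, by simp [hτ, key.1]⟩
  · exact ⟨τ⁻¹ • (τ • (1 : Matrix (Fin 8) (Fin 8) ℝ) + Amat ρ γ p H ξ).adjugate,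
      by rw [smul_smul, mul_inv_cancel₀ hτ, one_smul]⟩
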